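/- For the TRIP-Stern sequence for (e,12,12), the minimal terms lie on the left-most path of the tree and all have value 1: for every n, every entry of every triple Δ(v) with v ∈ {0,1}ⁿ is at least 1, and the second entry of the left-most triple f₀ⁿ(1,1,1) equals 1, so the minimum entry of level n equals 1. -/
import Mathlib


/-- `f₀(a,b,c) = (c,b,a+c)` for the triplet `(e,12,12)`. -/
def f0 (p : ℤ × ℤ × ℤ) : ℤ × ℤ × ℤ := (p.2.2, p.2.1, p.1 + p.2.2)

/-- `f₁(a,b,c) = (b,a,a+c)` for the triplet `(e,12,12)`. -/
def f1 (p : ℤ × ℤ × ℤ) : ℤ × ℤ × ℤ := (p.2.1, p.1, p.1 + p.2.2)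

/-- One step of the TRIP-Stern tree: apply `f₁` on a `true` and `f₀` on a `false`. -/
def step (p : ℤ × ℤ × ℤ) (i : Bool) : ℤ × ℤ × ℤ := if i then f1 p else f0 p

/-- `Δ(v) = f_{iₙ}(⋯ f_{i₁}(1,1,1) ⋯)`, applying `f_{i₁}` first. -/
def delta (v : List Bool) : ℤ × ℤ × ℤ := v.foldl step (1, 1, 1)

/-- The minimum coordinate of a triple. -/
def minEntry (p : ℤ × ℤ × ℤ) : ℤ := min p.1 (min p.2.1 p.2.2)

lemma pos_foldl (l : List Bool) : ∀ p : ℤ × ℤ × ℤ, 1 ≤ p.1 → 1 ≤ p.2.1 → 1 ≤ p.2.2 →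
    1 ≤ (l.foldl step p).1 ∧ 1 ≤ (l.foldl step p).2.1 ∧ 1 ≤ (l.foldl step p).2.2 := by
  induction l with
  | nil => exact fun p h1 h2 h3 => ⟨h1, h2, h3⟩
  | cons i l ih =>
    intro p h1 h2 h3
    cases i
    · exact ih _ h3 h2 (by simp [step, f0]; linarith)
    · exact ih _ h2 h1 (by simp [step, f1]; linarith)

lemma pos_delta (v : List Bool) :
    1 ≤ (delta v).1 ∧ 1 ≤ (delta v).2.1 ∧ 1 ≤ (delta v).2.2 :=
  pos_foldl v (1,1,1) le_rfl le_rfl le_rfl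

lemma replicate_foldl (n : ℕ) : ∀ p : ℤ × ℤ × ℤ,
    (List.replicate n false).foldl step p = f0^[n] p := by
  induction n with
  | zero => intro p; rfl
  | succ n ih =>
    intro p
    rw [List.replicate_succ, List.foldl_cons, Function.iterate_succ_apply]
    exact ih (f0 p)

lemma iter_snd (n : ℕ) : (f0^[n] ((1:ℤ), (1:ℤ), (1:ℤ))).2.1 = 1 := by
  have h : ∀ (n : ℕ) (p : ℤ × ℤ × ℤ), (f0^[n] p).2.1 = p.2.1 := by
    intro n
    induction n with
    | zero => intro p; rfl
    | succ n ih => intro p; rw [Function.iterate_succ_apply]; exact ih (f0 p)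
  exact h n _

/-- For the TRIP-Stern sequence for `(e,12,12)`, the minimal terms lie on the left-most
path and all have value `1`: every entry of every level-`n` triple `Δ(v)` is at least
`1`, the second entry of the left-most triple `f₀ⁿ(1,1,1)` equals `1`, and the minimum
entry of each level equals `1`. -/
theorem minTerms_leftmost_e1212 :
    (∀ (n : ℕ) (v : Fin n → Bool),
      1 ≤ (delta (List.ofFn v)).1 ∧
      1 ≤ (delta (List.ofFn v)).2.1 ∧
      1 ≤ (delta (List.ofFn v)).2.2) ∧
    (∀ n : ℕ, (f0^[n] (1, 1, 1)).2.1 = 1) ∧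
    (∀ n : ℕ,
      Finset.inf' Finset.univ Finset.univ_nonempty
        (fun v : Fin n → Bool => minEntry (delta (List.ofFn v))) = 1) := by
  refine ⟨fun n v => pos_delta _, iter_snd, fun n => ?_⟩
  apply le_antisymm
  · have h := Finset.inf'_le (f := fun v : Fin n → Bool => minEntry (delta (List.ofFn v)))
      (b := fun _ : Fin n => false) (Finset.mem_univ _)
    refine le_trans h ?_
    have hd : delta (List.ofFn (fun _ : Fin n => false)) = f0^[n] (1,1,1) := by
      rw [delta, List.ofFn_const, replicate_foldl]
    have h1 := pos_delta (List.ofFn (fun _ : Fin n => false))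
    rw [minEntry, hd, iter_snd]
    rw [hd] at h1
    simp only [min_le_iff, le_min_iff]
    right; left; rfl
  · apply Finset.le_inf'
    intro v _
    have h := pos_delta (List.ofFn v)
    simp only [minEntry, le_min_iff]
    exact ⟨h.1, h.2.1, h.2.2⟩
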